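/- Let α > 0. For every x ∈ (0,1), one has Re[ (1/2)·log( 2α / (1−x−2αi + √((1−x)·(1−x−4αi)) ) ) ] ≠ 0; equivalently, |1−x−2αi + √((1−x)·(1−x−4αi))| ≠ 2α. (This quantity is the real part of χ_α'(−x−2αi), since (1+(−x−2αi))² + 4α² = (1−x)(1−x−4αi).) -/

import Mathlib

open Complex

/-- The principal branch of the complex square root. -/
noncomputable def csqrt (z : ℂ) : ℂ := z ^ (1 / 2 : ℂ)

lemma csqrt_re_nonneg_im_nonpos {z : ℂ} (hz : z ≠ 0) (him : z.im < 0) :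
    0 ≤ (csqrt z).re ∧ (csqrt z).im ≤ 0 := by
  have harg₁ : -Real.pi < z.arg := Complex.neg_pi_lt_arg z
  have harg₂ : z.arg < 0 := Complex.arg_neg_iff.mpr him
  have h : csqrt z = Complex.exp (Complex.log z * (1 / 2 : ℂ)) := by
    rw [csqrt, Complex.cpow_def_of_ne_zero hz]
  have him' : (Complex.log z * (1 / 2 : ℂ)).im = z.arg / 2 := by
    simp [Complex.mul_im, Complex.log_im]
    ring
  constructor
  · rw [h, Complex.exp_re, him']
    apply mul_nonneg (Real.exp_nonneg _)
    apply Real.cos_nonneg_of_mem_Icc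
    constructor <;> [linarith; linarith [Complex.arg_le_pi z]]
  · rw [h, Complex.exp_im, him']
    apply mul_nonpos_of_nonneg_of_nonpos (Real.exp_nonneg _)
    apply Real.sin_nonpos_of_nonpos_of_neg_pi_le <;> linarith [Real.pi_pos]

theorem re_chi_deriv_top_side_ne_zero (α : ℝ) (hα : 0 < α)
    (x : ℝ) (hx : x ∈ Set.Ioo (0 : ℝ) 1) :
    ((1 / 2 : ℂ) * Complex.log (2 * (α : ℂ) /
        (1 - (x : ℂ) - 2 * (α : ℂ) * Complex.I +
          csqrt ((1 - (x : ℂ)) * (1 - (x : ℂ) - 4 * (α : ℂ) * Complex.I))))).re ≠ 0 ∧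
    ‖(1 - (x : ℂ) - 2 * (α : ℂ) * Complex.I +
        csqrt ((1 - (x : ℂ)) * (1 - (x : ℂ) - 4 * (α : ℂ) * Complex.I)))‖ ≠ 2 * α := by
  obtain ⟨hx0, hx1⟩ := hx
  set z : ℂ := (1 - (x : ℂ)) * (1 - (x : ℂ) - 4 * (α : ℂ) * Complex.I) with hz
  have hs : (0:ℝ) < 1 - x := by linarith
  have hzim : z.im < 0 := by
    have : z.im = (1 - x) * (-(4 * α)) := by
      simp [hz, Complex.mul_im, Complex.sub_im, Complex.sub_re, Complex.mul_re]
    rw [this]; nlinarith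
  have hzne : z ≠ 0 := by
    intro h
    rw [h] at hzim
    simp at hzim
  obtain ⟨hre, him⟩ := csqrt_re_nonneg_im_nonpos hzne hzim
  set w : ℂ := 1 - (x : ℂ) - 2 * (α : ℂ) * Complex.I + csqrt z with hw
  have hwre : w.re = 1 - x + (csqrt z).re := by
    simp [hw, Complex.add_re, Complex.sub_re, Complex.mul_re]
  have hwim : w.im = -(2 * α) + (csqrt z).im := by
    simp [hw, Complex.add_im, Complex.sub_im, Complex.mul_im]
  have habs : 2 * α < ‖w‖ := by
    have h1 : (2 * α) ^ 2 < (‖w‖) ^ 2 := by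
      rw [Complex.sq_norm, Complex.normSq_apply, hwre, hwim]
      nlinarith
    nlinarith [norm_nonneg w, hα]
  have hwabs_pos : 0 < ‖w‖ := by linarith
  have habsne : ‖w‖ ≠ 2 * α := by linarith
  refine ⟨?_, habsne⟩
  have hwne : w ≠ 0 := by
    intro h; rw [h] at hwabs_pos; simp at hwabs_pos
  have hq : ‖2 * (α : ℂ) / w‖ = 2 * α / ‖w‖ := by
    rw [norm_div]
    congr 1
    rw [norm_mul]
    simp [Complex.norm_real, abs_of_pos hα]
  have : ((1 / 2 : ℂ) * Complex.log (2 * (α : ℂ) / w)).re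
      = (1 / 2) * Real.log (2 * α / ‖w‖) := by
    rw [Complex.mul_re]
    simp [Complex.log_re, hq, abs_of_pos hα]
  rw [this]
  have hlt : 2 * α / ‖w‖ < 1 := (div_lt_one hwabs_pos).mpr habs
  have hgt : 0 < 2 * α / ‖w‖ := by positivity
  have : Real.log (2 * α / ‖w‖) < 0 := Real.log_neg hgt hlt
  intro h
  nlinarith
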